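/- Let M ≥ 1, let a_i > 0 and b_i > 0 for i = 1,…,M, set c_i = (1 + e^{a_i b_i})/e^{a_i b_i}, d_i = 1/(1 + e^{a_i b_i}) and U_i(P) = c_i·(1/(1 + e^{-a_i(P-b_i)}) − d_i), let P_T > 0, and let F = { P ∈ ℝ^M : P_i > 0 for all i and Σ P_i ≤ P_T }. For each i let S_i(P) denote the derivative of P ↦ log U_i(P) at P. Suppose P* satisfies P*_i > 0 for all i and Σ_{i=1}^M P*_i = P_T. Then P* maximizes Σ_{i=1}^M log U_i(P_i) over F if and only if there exists a real number p (the shadow price) such that S_i(P*_i) = p for every i = 1,…,M. -/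

import Mathlib

open Real Finset

noncomputable def Vfun (a b P : ℝ) : ℝ :=
  (1 - Real.exp (-(a*P))) / (1 + Real.exp (-(a*(P-b))))

noncomputable def slf (a b P : ℝ) : ℝ :=
  a * Real.exp (-(a*P)) / (1 - Real.exp (-(a*P)))
    + a * Real.exp (-(a*(P-b))) / (1 + Real.exp (-(a*(P-b))))

lemma Vfun_pos {a b P : ℝ} (ha : 0 < a) (hP : 0 < P) : 0 < Vfun a b P := by
  have h1 : Real.exp (-(a*P)) < 1 := by
    rw [Real.exp_lt_one_iff]; nlinarith
  have h2 : 0 < 1 + Real.exp (-(a*(P-b))) := by positivity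
  exact div_pos (by linarith) h2

lemma hasDerivAt_logV {a b P : ℝ} (ha : 0 < a) (hP : 0 < P) :
    HasDerivAt (fun P => Real.log (Vfun a b P)) (slf a b P) P := by
  have h1 : Real.exp (-(a*P)) < 1 := by rw [Real.exp_lt_one_iff]; nlinarith
  have h1' : (0:ℝ) < 1 - Real.exp (-(a*P)) := by linarith
  have h2 : 0 < 1 + Real.exp (-(a*(P-b))) := by positivity
  have hu : HasDerivAt (fun P : ℝ => 1 - Real.exp (-(a*P))) (a * Real.exp (-(a*P))) P := by
    have : HasDerivAt (fun P : ℝ => -(a*P)) (-a) P := by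
      simpa [Pi.neg_def] using ((hasDerivAt_id P).const_mul a).neg
    simpa [mul_comm] using (this.exp.const_sub 1)
  have hv : HasDerivAt (fun P : ℝ => 1 + Real.exp (-(a*(P-b)))) (-a * Real.exp (-(a*(P-b)))) P := by
    have : HasDerivAt (fun P : ℝ => -(a*(P-b))) (-a) P := by
      simpa [Pi.neg_def] using (((hasDerivAt_id P).sub_const b).const_mul a).neg
    simpa [mul_comm] using (this.exp.const_add 1)
  have hV : HasDerivAt (fun P => Vfun a b P)
      ((a * Real.exp (-(a*P)) * (1 + Real.exp (-(a*(P-b))))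
        - (1 - Real.exp (-(a*P))) * (-a * Real.exp (-(a*(P-b)))))
        / (1 + Real.exp (-(a*(P-b))))^2) P := by
    exact hu.div hv (ne_of_gt h2)
  have := hV.log (ne_of_gt (Vfun_pos ha hP))
  convert this using 1
  unfold slf Vfun
  field_simp
  ring

lemma slf_pos {a b P : ℝ} (ha : 0 < a) (hP : 0 < P) : 0 < slf a b P := by
  have h1 : Real.exp (-(a*P)) < 1 := by rw [Real.exp_lt_one_iff]; nlinarith
  have h1' : (0:ℝ) < 1 - Real.exp (-(a*P)) := by linarith
  have h2 : 0 < 1 + Real.exp (-(a*(P-b))) := by positivity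
  have e1 : 0 < Real.exp (-(a*P)) := Real.exp_pos _
  have e2 : 0 < Real.exp (-(a*(P-b))) := Real.exp_pos _
  unfold slf; positivity

lemma slf_anti {a b x y : ℝ} (ha : 0 < a) (hx : 0 < x) (hxy : x < y) :
    slf a b y < slf a b x := by
  have hy : 0 < y := lt_trans hx hxy
  have h1x : Real.exp (-(a*x)) < 1 := by rw [Real.exp_lt_one_iff]; nlinarith
  have h1y : Real.exp (-(a*y)) < 1 := by rw [Real.exp_lt_one_iff]; nlinarith
  have e1x : 0 < Real.exp (-(a*x)) := Real.exp_pos _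
  have e1y : 0 < Real.exp (-(a*y)) := Real.exp_pos _
  have e2x : 0 < Real.exp (-(a*(x-b))) := Real.exp_pos _
  have e2y : 0 < Real.exp (-(a*(y-b))) := Real.exp_pos _
  have hlt1 : Real.exp (-(a*y)) < Real.exp (-(a*x)) := by
    apply Real.exp_lt_exp.2; nlinarith
  have hlt2 : Real.exp (-(a*(y-b))) < Real.exp (-(a*(x-b))) := by
    apply Real.exp_lt_exp.2; nlinarith
  have t1 : a * Real.exp (-(a*y)) / (1 - Real.exp (-(a*y)))
      < a * Real.exp (-(a*x)) / (1 - Real.exp (-(a*x))) := by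
    rw [div_lt_div_iff₀ (by linarith) (by linarith)]
    nlinarith
  have t2 : a * Real.exp (-(a*(y-b))) / (1 + Real.exp (-(a*(y-b))))
      < a * Real.exp (-(a*(x-b))) / (1 + Real.exp (-(a*(x-b)))) := by
    rw [div_lt_div_iff₀ (by linarith) (by linarith)]
    nlinarith
  unfold slf; linarith

lemma tangent {a b x y : ℝ} (ha : 0 < a) (hx : 0 < x) (hy : 0 < y) :
    Real.log (Vfun a b x) ≤ Real.log (Vfun a b y) + slf a b y * (x - y) := by
  rcases lt_trichotomy x y with h | h | h
  · obtain ⟨z, hz, hz'⟩ := exists_hasDerivAt_eq_slope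
      (fun P => Real.log (Vfun a b P)) (slf a b) h
      (fun t ht => (hasDerivAt_logV ha (lt_of_lt_of_le hx ht.1)).continuousAt.continuousWithinAt)
      (fun t ht => hasDerivAt_logV ha (lt_trans hx ht.1))
    have hs : slf a b y < slf a b z := slf_anti ha (lt_trans hx hz.1) hz.2
    have hxy : (0:ℝ) < y - x := by linarith
    rw [eq_div_iff (by linarith : y - x ≠ 0)] at hz'
    nlinarith
  · simp [h]
  · obtain ⟨z, hz, hz'⟩ := exists_hasDerivAt_eq_slope
      (fun P => Real.log (Vfun a b P)) (slf a b) h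
      (fun t ht => (hasDerivAt_logV ha (lt_of_lt_of_le hy ht.1)).continuousAt.continuousWithinAt)
      (fun t ht => hasDerivAt_logV ha (lt_trans hy ht.1))
    have hs : slf a b z < slf a b y := slf_anti ha hy hz.1
    have hxy : (0:ℝ) < x - y := by linarith
    rw [eq_div_iff (by linarith : x - y ≠ 0)] at hz'
    nlinarith

lemma Ueq (a b P : ℝ) :
    ((1 + Real.exp (a*b)) / Real.exp (a*b)) *
      (1 / (1 + Real.exp (-a * (P - b))) - 1/(1+Real.exp (a*b))) = Vfun a b P := by
  have hE : Real.exp (-a * (P - b)) = Real.exp (a*b) * Real.exp (-(a*P)) := by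
    rw [← Real.exp_add]; ring_nf
  have hE0 : (0:ℝ) < Real.exp (a*b) := Real.exp_pos _
  have h1 : (0:ℝ) < 1 + Real.exp (a*b) := by positivity
  have h2 : (0:ℝ) < 1 + Real.exp (-a * (P - b)) := by positivity
  have h3 : (0:ℝ) < 1 + Real.exp (-(a*(P-b))) := by positivity
  have hE' : Real.exp (-(a*(P-b))) = Real.exp (-a*(P-b)) := by ring_nf
  unfold Vfun
  rw [hE', hE]
  field_simp
  ring

lemma exists_pos_gt {g : ℝ → ℝ} {c δ : ℝ} (hg : HasDerivAt g c 0) (hc : 0 < c)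
    (hδ : 0 < δ) : ∃ ε : ℝ, 0 < ε ∧ ε < δ ∧ g 0 < g ε := by
  have h := hasDerivAt_iff_tendsto_slope.1 hg
  have h' : Filter.Tendsto (slope g 0) (nhdsWithin 0 (Set.Ioi 0)) (nhds c) :=
    h.mono_left (nhdsWithin_mono _ (fun x hx => ne_of_gt hx))
  have h1 : ∀ᶠ x in nhdsWithin (0:ℝ) (Set.Ioi 0), 0 < slope g 0 x :=
    h' (eventually_gt_nhds hc)
  have h2 : ∀ᶠ x in nhdsWithin (0:ℝ) (Set.Ioi 0), x < δ :=
    mem_nhdsWithin_of_mem_nhds (Iio_mem_nhds hδ)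
  have h3 : ∀ᶠ x in nhdsWithin (0:ℝ) (Set.Ioi 0), x ∈ Set.Ioi (0:ℝ) :=
    self_mem_nhdsWithin
  obtain ⟨ε, hs, hlt, hmem⟩ := (h1.and (h2.and h3)).exists
  refine ⟨ε, hmem, hlt, ?_⟩
  have hε : (0:ℝ) < ε := hmem
  have : 0 < (g ε - g 0) / ε := by simpa [slope_def_field] using hs
  have := (div_pos_iff.1 this)
  rcases this with ⟨h, _⟩ | ⟨_, h⟩
  · linarith
  · linarith


/-- KKT / shadow-price characterization: a point `P*` with `P*_i > 0` for all `i` and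
`Σ P*_i = P_T` maximizes `Σ_i log U_i(P_i)` over the feasible set `F` if and only if
there is a shadow price `p` with `S_i(P*_i) = p` for every `i`, where `S_i` is the
derivative of `log U_i`. -/
theorem maximizer_iff_shadow_price
    (M : ℕ) (hM : 1 ≤ M)
    (a b c d : Fin M → ℝ)
    (ha : ∀ i, 0 < a i) (hb : ∀ i, 0 < b i)
    (hc : ∀ i, c i = (1 + Real.exp (a i * b i)) / Real.exp (a i * b i))
    (hd : ∀ i, d i = 1 / (1 + Real.exp (a i * b i)))
    (U : Fin M → ℝ → ℝ)
    (hU : ∀ i (P : ℝ), U i P = c i * (1 / (1 + Real.exp (-(a i) * (P - b i))) - d i))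
    (PT : ℝ) (hPT : 0 < PT)
    (F : Set (Fin M → ℝ))
    (hF : F = {P : Fin M → ℝ | (∀ i, 0 < P i) ∧ ∑ i, P i ≤ PT})
    (S : Fin M → ℝ → ℝ)
    (hS : ∀ i (P : ℝ), S i P = deriv (fun P => Real.log (U i P)) P)
    (Pstar : Fin M → ℝ) (hpos : ∀ i, 0 < Pstar i) (hsum : ∑ i, Pstar i = PT) :
    (∀ Q ∈ F, ∑ i, Real.log (U i (Q i)) ≤ ∑ i, Real.log (U i (Pstar i))) ↔
    (∃ p : ℝ, ∀ i, S i (Pstar i) = p) := by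
  have hUV : ∀ i, U i = fun P => Vfun (a i) (b i) P := by
    intro i; funext P
    rw [hU, hc, hd, ← Ueq (a i) (b i) P]
  have hSsl : ∀ i, S i (Pstar i) = slf (a i) (b i) (Pstar i) := by
    intro i
    rw [hS, hUV i]
    exact (hasDerivAt_logV (ha i) (hpos i)).deriv
  constructor
  · -- maximizer ⇒ shadow price
    intro hmax
    have key : ∀ i j : Fin M,
        ¬ (slf (a j) (b j) (Pstar j) < slf (a i) (b i) (Pstar i)) := by
      intro i j hlt
      have hij : i ≠ j := by
        rintro rfl; exact lt_irrefl _ hlt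
      set g : ℝ → ℝ := fun ε =>
        Real.log (Vfun (a i) (b i) (Pstar i + ε)) +
          Real.log (Vfun (a j) (b j) (Pstar j - ε)) with hgdef
      have hg : HasDerivAt g
          (slf (a i) (b i) (Pstar i) - slf (a j) (b j) (Pstar j)) 0 := by
        have hin1 : HasDerivAt (fun ε : ℝ => Pstar i + ε) 1 0 :=
          (hasDerivAt_id 0).const_add (Pstar i)
        have hin2 : HasDerivAt (fun ε : ℝ => Pstar j - ε) (-1) 0 := by
          simpa using (hasDerivAt_id 0).const_sub (Pstar j)
        have h1 := (hasDerivAt_logV (a := a i) (b := b i) (ha i)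
            (P := Pstar i + 0) (by simpa using hpos i)).comp 0 hin1
        have h2 := (hasDerivAt_logV (a := a j) (b := b j) (ha j)
            (P := Pstar j - 0) (by simpa using hpos j)).comp 0 hin2
        have := h1.add h2
        simpa [hgdef, Function.comp_def, Pi.add_def, mul_comm, sub_eq_add_neg] using this
      obtain ⟨ε, hε0, hεδ, hgain⟩ := exists_pos_gt hg (by linarith) (hpos j)
      set Q : Fin M → ℝ := fun k =>
        Pstar k + (if k = i then ε else 0) - (if k = j then ε else 0) with hQdef
      have hQi : Q i = Pstar i + ε := by simp [hQdef, hij]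
      have hQj : Q j = Pstar j - ε := by simp [hQdef, hij.symm]
      have hQother : ∀ k, k ≠ i → k ≠ j → Q k = Pstar k := by
        intro k h1 h2; simp [hQdef, h1, h2]
      have hQF : Q ∈ F := by
        rw [hF]
        refine ⟨fun k => ?_, ?_⟩
        · by_cases h1 : k = i
          · rw [h1, hQi]; have := hpos i; linarith
          · by_cases h2 : k = j
            · rw [h2, hQj]; linarith
            · rw [hQother k h1 h2]; exact hpos k
        · have : ∑ k, Q k = PT := by
            simp only [hQdef, sum_add_distrib, sum_sub_distrib]
            rw [Finset.sum_ite_eq' univ i (fun _ => ε),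
              Finset.sum_ite_eq' univ j (fun _ => ε)]
            simp [hsum]
          linarith [this.le]
      have hterm : ∀ k, Real.log (U k (Q k)) = Real.log (U k (Pstar k)) +
          ((if k = i then Real.log (Vfun (a i) (b i) (Pstar i + ε))
              - Real.log (Vfun (a i) (b i) (Pstar i)) else 0) +
           (if k = j then Real.log (Vfun (a j) (b j) (Pstar j - ε))
              - Real.log (Vfun (a j) (b j) (Pstar j)) else 0)) := by
        intro k
        by_cases h1 : k = i
        · simp [h1, hQi, hUV i, hij]
        · by_cases h2 : k = j
          · simp [h1, h2, hQj, hUV j, Ne.symm hij]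
          · rw [hQother k h1 h2]; simp [h1, h2]
      have hsumQ : ∑ k, Real.log (U k (Q k)) = (∑ k, Real.log (U k (Pstar k))) +
          ((Real.log (Vfun (a i) (b i) (Pstar i + ε))
              - Real.log (Vfun (a i) (b i) (Pstar i))) +
           (Real.log (Vfun (a j) (b j) (Pstar j - ε))
              - Real.log (Vfun (a j) (b j) (Pstar j)))) := by
        rw [Finset.sum_congr rfl (fun k _ => hterm k)]
        rw [sum_add_distrib, sum_add_distrib,
          Finset.sum_ite_eq' univ i, Finset.sum_ite_eq' univ j]
        simp
      have hg0 : g 0 = Real.log (Vfun (a i) (b i) (Pstar i)) +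
          Real.log (Vfun (a j) (b j) (Pstar j)) := by simp [hgdef]
      have hgε : g ε = Real.log (Vfun (a i) (b i) (Pstar i + ε)) +
          Real.log (Vfun (a j) (b j) (Pstar j - ε)) := rfl
      have := hmax Q hQF
      rw [hsumQ] at this
      rw [hg0, hgε] at hgain
      linarith
    refine ⟨slf (a ⟨0, hM⟩) (b ⟨0, hM⟩) (Pstar ⟨0, hM⟩), fun i => ?_⟩
    rw [hSsl i]
    exact le_antisymm (not_lt.1 (key i ⟨0, hM⟩)) (not_lt.1 (key ⟨0, hM⟩ i))
  · -- shadow price ⇒ maximizer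
    rintro ⟨p, hp⟩ Q hQ
    rw [hF] at hQ
    obtain ⟨hQpos, hQsum⟩ := hQ
    have hp' : ∀ i, slf (a i) (b i) (Pstar i) = p := by
      intro i; rw [← hSsl i]; exact hp i
    have hppos : 0 < p := by
      rw [← hp' ⟨0, hM⟩]; exact slf_pos (ha _) (hpos _)
    have step : ∀ i, Real.log (U i (Q i)) ≤
        Real.log (U i (Pstar i)) + p * (Q i - Pstar i) := by
      intro i
      rw [hUV i, ← hp' i]
      exact tangent (ha i) (hQpos i) (hpos i)
    calc ∑ i, Real.log (U i (Q i))
        ≤ ∑ i, (Real.log (U i (Pstar i)) + p * (Q i - Pstar i)) :=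
          Finset.sum_le_sum (fun i _ => step i)
      _ = (∑ i, Real.log (U i (Pstar i))) + p * ((∑ i, Q i) - PT) := by
          rw [sum_add_distrib, ← Finset.mul_sum, sum_sub_distrib, hsum]
      _ ≤ ∑ i, Real.log (U i (Pstar i)) := by nlinarith
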